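/- Let T be a non-reversible tree. For every condensation f of T that is not an automorphism, let α_f := min{ht(t) : t ∈ T and ht(t) < ht(f(t))}. Then min{α_f : f a condensation of T that is not an automorphism} = max{β < ht(T) : for every condensation f of T, f maps T|β bijectively onto itself and the restriction f↾(T|β) is an automorphism of the tree T|β}. -/
import Mathlib


/- A tree is a partial order in which the set of strict predecessors of every
element is well-ordered. Basic vocabulary: condensations, automorphisms,
reversibility, heights, levels, nodes, upward closures, branches. -/

universe u v

/- The height of an element `t`: the order type of the set `(·,t)` of its strict
predecessors (which is well-ordered when the order is a tree). -/
open Classical in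
noncomputable def treeHt {T : Type u} [PartialOrder T] (t : T) : Ordinal.{u} :=
  if h : IsWellOrder {s : T // s < t} (fun a b => (a : T) < (b : T)) then
    @Ordinal.type {s : T // s < t} (fun a b => (a : T) < (b : T)) h
  else 0

/-- A partial order is a tree iff every set `(·,t)` is well-ordered by `<`. -/
def IsTree (T : Type u) [PartialOrder T] : Prop :=
  ∀ t : T, IsWellOrder {s : T // s < t} (fun a b => (a : T) < (b : T))

/-- A condensation: a bijective endomorphism. -/
def IsCond {T : Type u} [PartialOrder T] (f : T → T) : Prop :=
  Function.Bijective f ∧ ∀ s t : T, s < t → f s < f t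

/-- An automorphism: a bijection preserving and reflecting `<`. -/
def IsAuto {T : Type u} [PartialOrder T] (f : T → T) : Prop :=
  Function.Bijective f ∧ ∀ s t : T, s < t ↔ f s < f t

/-- A structure is reversible iff every condensation is an automorphism. -/
def Reversible (T : Type u) [PartialOrder T] : Prop :=
  ∀ f : T → T, IsCond f → IsAuto f

/-- The `α`-th level: elements of height `α`. -/
def level (T : Type u) [PartialOrder T] (α : Ordinal.{u}) : Set T :=
  {t : T | treeHt t = α}

/-- The height of the tree: the least ordinal `α` with `L_α = ∅`. -/
noncomputable def treeHeight (T : Type u) [PartialOrder T] : Ordinal.{u} :=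
  sInf {α : Ordinal.{u} | level T α = ∅}

/-- Nodes: equivalence classes of the relation `s ∼ t` iff `(·,s) = (·,t)`. -/
def IsNode {T : Type u} [PartialOrder T] (N : Set T) : Prop :=
  ∃ t : T, N = {s : T | Set.Iio s = Set.Iio t}

/-- `S↑`, the upward closure of `S`. -/
def upClo {T : Type u} [PartialOrder T] (S : Set T) : Set T :=
  {t : T | ∃ s ∈ S, s ≤ t}

/-- A branch: a maximal chain. -/
def IsBranch {T : Type u} [PartialOrder T] (b : Set T) : Prop :=
  IsMaxChain (· ≤ ·) b

/- The height (order type) of a chain (junk value `0` if not well-ordered;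
in a tree every chain is well-ordered). -/
open Classical in
noncomputable def chainHt {T : Type u} [PartialOrder T] (b : Set T) : Ordinal.{u} :=
  if h : IsWellOrder b (fun x y : b => (x : T) < (y : T)) then
    @Ordinal.type b (fun x y : b => (x : T) < (y : T)) h
  else 0

/-- `f` maps `T|β` bijectively onto itself and the restriction `f↾(T|β)` is an
automorphism of the tree `T|β` (the set of elements of height `< β` with the
induced order). -/
def RestrAuto {T : Type u} [PartialOrder T] (f : T → T) (β : Ordinal.{u}) : Prop :=
  Set.BijOn f {t : T | treeHt t < β} {t : T | treeHt t < β} ∧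
  ∀ s t : T, treeHt s < β → treeHt t < β → (s < t ↔ f s < f t)

section aux
variable {T : Type u} [PartialOrder T]

theorem treeHt_def (hT : IsTree T) (t : T) :
    treeHt t = @Ordinal.type {s : T // s < t} (fun a b => (a : T) < (b : T)) (hT t) :=
  dif_pos (hT t)

theorem ht_eq_typein (hT : IsTree T) {s t : T} (h : s < t) :
    treeHt s =
      (@Ordinal.typein {v : T // v < t} (fun a b => (a : T) < (b : T)) (hT t)) ⟨s, h⟩ := by
  haveI := hT t
  haveI := hT s
  rw [treeHt_def hT, ← Ordinal.type_subrel]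
  exact RelIso.ordinal_type_eq
    ⟨⟨fun u => ⟨⟨u.1, lt_trans u.2 h⟩, u.2⟩, fun b => ⟨b.1.1, b.2⟩, fun u => rfl, fun b => rfl⟩,
      Iff.rfl⟩

theorem ht_lt_of_lt (hT : IsTree T) {s t : T} (h : s < t) : treeHt s < treeHt t := by
  haveI := hT t
  rw [ht_eq_typein hT h, treeHt_def hT t]
  exact Ordinal.typein_lt_type _ _

theorem exists_lt_of_lt_ht (hT : IsTree T) {t : T} {β : Ordinal.{u}}
    (hβ : β < treeHt t) : ∃ s : T, s < t ∧ treeHt s = β := by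
  haveI := hT t
  rw [treeHt_def hT] at hβ
  obtain ⟨a, ha⟩ := Ordinal.typein_surj _ hβ
  exact ⟨a.1, a.2, by rw [ht_eq_typein hT a.2]; exact ha⟩

theorem ht_le_ht_apply (hT : IsTree T) {f : T → T} (hf : IsCond f) (t : T) :
    treeHt t ≤ treeHt (f t) := by
  haveI := hT t; haveI := hT (f t)
  rw [treeHt_def hT t, treeHt_def hT (f t)]
  exact RelEmbedding.ordinal_type_le
    (RelEmbedding.ofMonotone (fun s => ⟨f s.1, hf.2 _ _ s.2⟩) fun a b hab => hf.2 _ _ hab)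

theorem ht_apply_of_auto (hT : IsTree T) {f : T → T} (hf : IsAuto f) (t : T) :
    treeHt (f t) = treeHt t := by
  haveI := hT t; haveI := hT (f t)
  rw [treeHt_def hT t, treeHt_def hT (f t)]
  exact (RelIso.ordinal_type_eq
    { toEquiv := Equiv.subtypeEquiv (Equiv.ofBijective f hf.1) fun a => hf.2 a t,
      map_rel_iff' := fun {a b} => (hf.2 a.1 b.1).symm }).symm

theorem tri (hT : IsTree T) {t a b : T} (ha : a < t) (hb : b < t) :
    a < b ∨ a = b ∨ b < a := by
  haveI := hT t
  rcases trichotomous_of (fun x y : {s : T // s < t} => (x : T) < (y : T)) ⟨a, ha⟩ ⟨b, hb⟩ with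
    h | h | h
  · exact Or.inl h
  · exact Or.inr (Or.inl (congrArg Subtype.val h))
  · exact Or.inr (Or.inr h)

theorem lt_of_apply_lt (hT : IsTree T) {f : T → T} (hf : IsCond f) {s t : T}
    (hps : treeHt (f s) = treeHt s) (hpt : treeHt (f t) = treeHt t)
    (hpu : ∀ u, u < t → treeHt (f u) = treeHt u) (h : f s < f t) : s < t := by
  have h1 : treeHt s < treeHt t := by
    rw [← hps, ← hpt]; exact ht_lt_of_lt hT h
  obtain ⟨u, hut, huh⟩ := exists_lt_of_lt_ht hT h1
  have hfu : f u < f t := hf.2 _ _ hut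
  have heq : treeHt (f u) = treeHt (f s) := by rw [hpu u hut, huh, hps]
  rcases tri hT hfu h with h2 | h2 | h2
  · exact absurd heq (ne_of_lt (ht_lt_of_lt hT h2))
  · rwa [← hf.1.1 h2]
  · exact absurd heq.symm (ne_of_lt (ht_lt_of_lt hT h2))

theorem exists_moved (hT : IsTree T) {f : T → T} (hf : IsCond f) (hfa : ¬IsAuto f) :
    {t : T | treeHt t < treeHt (f t)}.Nonempty := by
  by_contra h
  rw [Set.not_nonempty_iff_eq_empty] at h
  have hall : ∀ t, treeHt (f t) = treeHt t := by
    intro t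
    have h2 := Set.eq_empty_iff_forall_notMem.1 h t
    simp only [Set.mem_setOf_eq, not_lt] at h2
    exact le_antisymm h2 (ht_le_ht_apply hT hf t)
  exact hfa ⟨hf.1, fun s t => ⟨hf.2 s t,
    fun hh => lt_of_apply_lt hT hf (hall s) (hall t) (fun u _ => hall u) hh⟩⟩

theorem ht_lt_treeHeight (hT : IsTree T) (t : T) : treeHt t < treeHeight T := by
  have hne : {α : Ordinal.{u} | level T α = ∅}.Nonempty := by
    refine ⟨Ordinal.lsub fun t : T => treeHt t, ?_⟩
    ext s
    simp only [level, Set.mem_setOf_eq, Set.mem_empty_iff_false, iff_false]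
    exact fun hs => absurd hs (ne_of_lt (Ordinal.lt_lsub _ s))
  have hmem : level T (treeHeight T) = ∅ := csInf_mem hne
  by_contra h
  rcases eq_or_lt_of_le (not_lt.1 h) with h1 | h1
  · exact Set.eq_empty_iff_forall_notMem.1 hmem t h1.symm
  · obtain ⟨s, _, hs⟩ := exists_lt_of_lt_ht hT h1
    exact Set.eq_empty_iff_forall_notMem.1 hmem s hs

theorem ht_apply_le (hT : IsTree T) {f : T → T} (hf : IsCond f) {β : Ordinal.{u}} {t : T}
    (hra : RestrAuto f β) (ht1 : treeHt t < β) (ht2 : treeHt (f t) < β) :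
    treeHt (f t) ≤ treeHt t := by
  classical
  haveI := hT t; haveI := hT (f t)
  have key : ∀ v : {v : T // v < f t}, ∃ u : T, treeHt u < β ∧ f u = v.1 := by
    intro v
    have hv : treeHt v.1 < β := (ht_lt_of_lt hT v.2).trans ht2
    obtain ⟨u, hu1, hu2⟩ := hra.1.2.2 hv
    exact ⟨u, hu1, hu2⟩
  choose g hg1 hg2 using key
  have hglt : ∀ v, g v < t := fun v =>
    (hra.2 _ _ (hg1 v) ht1).2 (by rw [hg2 v]; exact v.2)
  rw [treeHt_def hT t, treeHt_def hT (f t)]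
  refine RelEmbedding.ordinal_type_le
    (RelEmbedding.ofMonotone (fun v => ⟨g v, hglt v⟩) ?_)
  intro a b hab
  have h3 : f (g a) < f (g b) := by rw [hg2 a, hg2 b]; exact hab
  exact (hra.2 _ _ (hg1 a) (hg1 b)).2 h3

end aux
/-- Let `T` be a non-reversible tree. For every condensation `f` of `T`
that is not an automorphism let `α_f := min{ht(t) : t ∈ T ∧ ht(t) < ht(f(t))}`. Then
`min{α_f : f a condensation of T that is not an automorphism}` is the maximum of the
set of `β < ht(T)` such that for every condensation `f` of `T`, `f` maps `T|β`
bijectively onto itself and `f↾(T|β)` is an automorphism of `T|β`. -/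
theorem stmt1 {T : Type u} [PartialOrder T] (hT : IsTree T) (hnr : ¬ Reversible T) :
    IsGreatest
      {β : Ordinal.{u} | β < treeHeight T ∧ ∀ f : T → T, IsCond f → RestrAuto f β}
      (sInf {α : Ordinal.{u} | ∃ f : T → T, IsCond f ∧ ¬ IsAuto f ∧
        α = sInf (treeHt '' {t : T | treeHt t < treeHt (f t)})}) := by
  classical
  have hnr2 : ¬ (∀ f : T → T, IsCond f → IsAuto f) := hnr
  push_neg at hnr2
  obtain ⟨f₀, hf₀c, hf₀a⟩ := hnr2
  set B : Set Ordinal.{u} := {α : Ordinal.{u} | ∃ f : T → T, IsCond f ∧ ¬ IsAuto f ∧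
      α = sInf (treeHt '' {t : T | treeHt t < treeHt (f t)})} with hBdef
  have hBne : B.Nonempty := ⟨_, f₀, hf₀c, hf₀a, rfl⟩
  obtain ⟨g, hgc, hga, hm⟩ := csInf_mem hBne
  have hAg := exists_moved hT hgc hga
  have hmem : sInf B ∈ treeHt '' {t : T | treeHt t < treeHt (g t)} := by
    rw [hm]; exact csInf_mem (hAg.image _)
  obtain ⟨t₀, ht₀, ht₀m⟩ := hmem
  have star : ∀ f : T → T, IsCond f → ∀ t : T, treeHt t < sInf B →
      treeHt (f t) = treeHt t := by
    intro f hf t htm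
    refine le_antisymm ?_ (ht_le_ht_apply hT hf t)
    by_contra h2
    replace h2 : treeHt t < treeHt (f t) := not_le.1 h2
    have hfa : ¬IsAuto f := fun ha => absurd (ht_apply_of_auto hT ha t) (ne_of_gt h2)
    have hBmem : sInf (treeHt '' {t : T | treeHt t < treeHt (f t)}) ∈ B := ⟨f, hf, hfa, rfl⟩
    have h3 := csInf_le' hBmem
    have h4 : sInf (treeHt '' {t : T | treeHt t < treeHt (f t)}) ≤ treeHt t :=
      csInf_le' ⟨t, h2, rfl⟩
    exact absurd (h3.trans h4) (not_le.2 htm)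
  constructor
  · refine ⟨ht₀m ▸ ht_lt_treeHeight hT t₀, fun f hf => ?_⟩
    have maps : Set.MapsTo f {t : T | treeHt t < sInf B} {t : T | treeHt t < sInf B} := by
      intro t hhh
      simp only [Set.mem_setOf_eq] at *
      rw [star f hf t hhh]; exact hhh
    refine ⟨⟨maps, fun a _ b _ hab => hf.1.1 hab, ?_⟩,
      fun s t hs htt => ⟨hf.2 s t, fun h => ?_⟩⟩
    · intro s hs
      obtain ⟨t, ht⟩ := hf.1.2 s
      refine ⟨t, ?_, ht⟩
      simp only [Set.mem_setOf_eq] at *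
      calc treeHt t ≤ treeHt (f t) := ht_le_ht_apply hT hf t
        _ = treeHt s := by rw [ht]
        _ < sInf B := hs
    · exact lt_of_apply_lt hT hf (star f hf s hs) (star f hf t htt)
        (fun u hu => star f hf u ((ht_lt_of_lt hT hu).trans htt)) h
  · rintro β ⟨hβht, hβ⟩
    by_contra hcon
    push_neg at hcon
    have hra := hβ g hgc
    have h1 : treeHt t₀ < β := by rw [ht₀m]; exact hcon
    have h2 : treeHt (g t₀) < β := hra.1.1 h1
    exact absurd ht₀ (not_lt.2 (ht_apply_le hT hgc hra h1 h2))
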